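/- arXiv:math/0608309 — 5 statements merged into one kernel-verified Lean document; each statement's English description precedes it below -/
import Mathlib

section
/- Fix M ∈ ℕ and work in R = MvPowerSeries (Fin M) ℂ with the product topology (ℂ discrete). Let J : R → R be a ℂ-linear continuous map which is asymptotically contractive in the sense that for all multi-indices j, k ∈ ℕ^M, if the coefficient of X^k in J(X^j) is nonzero then j < k (componentwise ≤ and j ≠ k). Then for every S₀ ∈ R the fixed point equation S = J(S) + S₀ has a unique solution S ∈ R. -/
/-- The product (coefficient-wise) topology on `MvPowerSeries (Fin M) ℂ`, where the
coefficient field `ℂ` carries the *discrete* topology. -/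
noncomputable instance mvPowerSeriesDiscretePiTopology (M : ℕ) :
    TopologicalSpace (MvPowerSeries (Fin M) ℂ) :=
  @Pi.topologicalSpace ((Fin M) →₀ ℕ) (fun _ => ℂ) (fun _ => ⊥)

/-- Contractive mapping principle (linear case): if `J` is a continuous linear operator
on formal multiseries which is asymptotically contractive (it strictly raises the
multi-index of every monomial), then for every `S₀` the fixed point equation
`S = J S + S₀` has a unique solution. -/
theorem stmt_7 (M : ℕ)
    (J : MvPowerSeries (Fin M) ℂ →ₗ[ℂ] MvPowerSeries (Fin M) ℂ)
    (hJcont : Continuous J)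
    (hJcontr : ∀ j k : (Fin M) →₀ ℕ,
      MvPowerSeries.coeff (R := ℂ) k (J (MvPowerSeries.monomial (R := ℂ) j 1)) ≠ 0 → j < k)
    (S₀ : MvPowerSeries (Fin M) ℂ) :
    ∃! S : MvPowerSeries (Fin M) ℂ, S = J S + S₀ := by
  classical
  set a : ((Fin M) →₀ ℕ) → ((Fin M) →₀ ℕ) → ℂ :=
    fun j k => MvPowerSeries.coeff k (J (MvPowerSeries.monomial j 1)) with ha
  -- key coefficient formula
  have key : ∀ (k : (Fin M) →₀ ℕ) (S : MvPowerSeries (Fin M) ℂ),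
      MvPowerSeries.coeff k (J S)
        = ∑ j ∈ Finset.Iio k, MvPowerSeries.coeff j S * a j k := by
    intro k
    letI : TopologicalSpace ℂ := ⊥
    haveI : DiscreteTopology ℂ := ⟨rfl⟩
    have hF : Continuous (fun S : MvPowerSeries (Fin M) ℂ => MvPowerSeries.coeff k (J S)) :=
      (continuous_apply k).comp hJcont
    have hO : IsOpen ((fun S : MvPowerSeries (Fin M) ℂ => MvPowerSeries.coeff k (J S)) ⁻¹' {0}) :=
      (isOpen_discrete _).preimage hF
    erw [isOpen_pi_iff] at hO
    obtain ⟨I, u, hu, hsub⟩ := hO (0 : MvPowerSeries (Fin M) ℂ) (show MvPowerSeries.coeff k (J 0) = 0 by simp)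
    have hI : ∀ S : MvPowerSeries (Fin M) ℂ,
        (∀ i ∈ I, MvPowerSeries.coeff i S = 0) → MvPowerSeries.coeff k (J S) = 0 := by
      intro S hS
      exact hsub fun i hi => by
        rw [show S i = MvPowerSeries.coeff i S from rfl, hS i hi]
        exact (hu i hi).2
    have hmono : ∀ (i : (Fin M) →₀ ℕ) (c : ℂ),
        MvPowerSeries.coeff k (J (MvPowerSeries.monomial i c)) = c * a i k := by
      intro i c
      have h1 : MvPowerSeries.monomial i c = c • MvPowerSeries.monomial i 1 := by
        rw [← map_smul, smul_eq_mul, mul_one]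
      rw [h1, map_smul, map_smul, smul_eq_mul]
    have formI : ∀ S : MvPowerSeries (Fin M) ℂ,
        MvPowerSeries.coeff k (J S) = ∑ i ∈ I, MvPowerSeries.coeff i S * a i k := by
      intro S
      set T : MvPowerSeries (Fin M) ℂ :=
        ∑ i ∈ I, MvPowerSeries.monomial i (MvPowerSeries.coeff i S) with hT
      have hzero : MvPowerSeries.coeff k (J (S - T)) = 0 := by
        apply hI
        intro i hi
        rw [map_sub, hT, map_sum]
        simp only [MvPowerSeries.coeff_monomial]
        rw [Finset.sum_ite_eq I i (fun i' => MvPowerSeries.coeff i' S), if_pos hi, sub_self]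
      have : MvPowerSeries.coeff k (J S)
          = MvPowerSeries.coeff k (J T) + MvPowerSeries.coeff k (J (S - T)) := by
        rw [← map_add, ← map_add, add_sub_cancel]
      rw [this, hzero, add_zero, hT, map_sum, map_sum]
      exact Finset.sum_congr rfl fun i _ => hmono i _
    have hanotI : ∀ j ∉ I, a j k = 0 := by
      intro j hj
      have h := formI (MvPowerSeries.monomial j 1)
      simp only [MvPowerSeries.coeff_monomial] at h
      show MvPowerSeries.coeff k (J (MvPowerSeries.monomial j 1)) = 0
      rw [h]
      exact Finset.sum_eq_zero fun i hi => by
        rw [if_neg (show ¬ i = j from fun e => hj (e ▸ hi)), zero_mul]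
    intro S
    rw [formI S]
    have h1 : ∑ i ∈ I, MvPowerSeries.coeff i S * a i k
        = ∑ i ∈ I ∩ Finset.Iio k, MvPowerSeries.coeff i S * a i k := by
      refine (Finset.sum_subset Finset.inter_subset_left fun i hi hni => ?_).symm
      have : ¬ i < k := fun h => hni (Finset.mem_inter.mpr ⟨hi, Finset.mem_Iio.mpr h⟩)
      rw [show a i k = 0 from by_contra fun h => this (hJcontr i k h), mul_zero]
    have h2 : ∑ j ∈ Finset.Iio k, MvPowerSeries.coeff j S * a j k
        = ∑ j ∈ I ∩ Finset.Iio k, MvPowerSeries.coeff j S * a j k := by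
      refine (Finset.sum_subset Finset.inter_subset_right fun j hj hnj => ?_).symm
      have : j ∉ I := fun h => hnj (Finset.mem_inter.mpr ⟨h, hj⟩)
      rw [hanotI j this, mul_zero]
    rw [h1, ← h2]
  -- construct the solution by well-founded recursion
  have wf : WellFounded ((· < ·) : ((Fin M) →₀ ℕ) → ((Fin M) →₀ ℕ) → Prop) := wellFounded_lt
  set c : ((Fin M) →₀ ℕ) → ℂ :=
    wf.fix (fun k ih =>
      (∑ j ∈ (Finset.Iio k).attach, ih j (Finset.mem_Iio.mp j.2) * a j k)
        + MvPowerSeries.coeff k S₀) with hcdef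
  have hc : ∀ k, c k = (∑ j ∈ Finset.Iio k, c j * a j k) + MvPowerSeries.coeff k S₀ := by
    intro k
    rw [hcdef, WellFounded.fix_eq]
    congr 1
    rw [← Finset.sum_attach (Finset.Iio k) (fun j => c j * a j k)]
  refine ⟨(c : MvPowerSeries (Fin M) ℂ), ?_, ?_⟩
  · apply MvPowerSeries.ext
    intro k
    rw [map_add, key k c]
    exact hc k
  · intro T hT
    have huniq : ∀ k, MvPowerSeries.coeff k T = c k := by
      intro k
      refine wf.induction (C := fun k => MvPowerSeries.coeff k T = c k) k ?_
      intro k ih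
      rw [hT, map_add, key k T, hc k]
      exact congrArg (· + _) (Finset.sum_congr rfl fun j hj =>
        by rw [ih j (Finset.mem_Iio.mp hj)])
    apply MvPowerSeries.ext
    intro k
    rw [huniq k]
    rfl
end

section
/- Fix M ∈ ℕ and work in R = MvPowerSeries (Fin M) ℂ with the product topology (ℂ discrete). Let S ∈ R and let (S_n)_{n ∈ ℕ} be a sequence in R, all with zero constant coefficient. Then there exists a unique y ∈ R with zero constant coefficient such that the family n ↦ S_{n−2} · y^n (n ≥ 2) is summable and y = S + Σ_{n ≥ 2} S_{n−2} y^n. -/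
namespace Stmt8Aux

open Finset MvPowerSeries

variable {M : ℕ}

lemma deg_add (p q : Fin M →₀ ℕ) :
    (p + q).degree = p.degree + q.degree := by
  simp only [Finsupp.degree_eq_weight_one, map_add]

lemma coeff_pow_eq_zero {b : MvPowerSeries (Fin M) ℂ}
    (hb : MvPowerSeries.constantCoeff b = 0) :
    ∀ (k : ℕ) (d : Fin M →₀ ℕ), d.degree < k →
      MvPowerSeries.coeff d (b ^ k) = 0 := by
  intro k
  induction k with
  | zero => intro d hd; omega
  | succ k ih =>
    intro d hd
    rw [pow_succ, MvPowerSeries.coeff_mul]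
    refine Finset.sum_eq_zero fun p hp => ?_
    rw [Finset.HasAntidiagonal.mem_antidiagonal] at hp
    by_cases h1 : p.2 = 0
    · rw [h1, MvPowerSeries.coeff_zero_eq_constantCoeff, hb, mul_zero]
    · have h2 : p.1.degree < k := by
        have h3 : p.2.degree ≠ 0 := fun h => h1 ((Finsupp.degree_eq_zero_iff p.2).1 h)
        have h4 : p.1.degree + p.2.degree = d.degree := by rw [← deg_add, hp]
        omega
      rw [ih p.1 h2, zero_mul]

lemma coeff_mul_pow_eq_zero {a b : MvPowerSeries (Fin M) ℂ}
    (ha : MvPowerSeries.constantCoeff a = 0)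
    (hb : MvPowerSeries.constantCoeff b = 0)
    {k : ℕ} {d : Fin M →₀ ℕ} (hd : d.degree < k + 1) :
    MvPowerSeries.coeff d (a * b ^ k) = 0 := by
  rw [MvPowerSeries.coeff_mul]
  refine Finset.sum_eq_zero fun p hp => ?_
  rw [Finset.HasAntidiagonal.mem_antidiagonal] at hp
  by_cases h1 : p.1 = 0
  · rw [h1, MvPowerSeries.coeff_zero_eq_constantCoeff, ha, zero_mul]
  · have h2 : p.2.degree < k := by
      have h3 : p.1.degree ≠ 0 := fun h => h1 ((Finsupp.degree_eq_zero_iff p.1).1 h)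
      have h4 : p.1.degree + p.2.degree = d.degree := by rw [← deg_add, hp]
      omega
    rw [coeff_pow_eq_zero hb k p.2 h2, mul_zero]

lemma coeff_pow_congr {y z : MvPowerSeries (Fin M) ℂ} {N : ℕ}
    (h : ∀ e : Fin M →₀ ℕ, e.degree ≤ N →
        MvPowerSeries.coeff e y = MvPowerSeries.coeff e z) :
    ∀ (k : ℕ) (q : Fin M →₀ ℕ), q.degree ≤ N →
      MvPowerSeries.coeff q (y ^ k) = MvPowerSeries.coeff q (z ^ k) := by
  intro k
  induction k with
  | zero => intro q _; rfl
  | succ k ih =>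
    intro q hq
    rw [pow_succ, pow_succ, MvPowerSeries.coeff_mul, MvPowerSeries.coeff_mul]
    refine Finset.sum_congr rfl fun p hp => ?_
    rw [Finset.HasAntidiagonal.mem_antidiagonal] at hp
    have hdeg : p.1.degree + p.2.degree = q.degree := by rw [← deg_add, hp]
    rw [ih p.1 (by omega), h p.2 (by omega)]

variable (S : MvPowerSeries (Fin M) ℂ) (Sn : ℕ → MvPowerSeries (Fin M) ℂ)

/-- One step of the fixed-point iteration, defined coefficient-wise with finite sums. -/
noncomputable def F (a : MvPowerSeries (Fin M) ℂ) : MvPowerSeries (Fin M) ℂ :=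
  fun d => MvPowerSeries.coeff d S +
    ∑ n ∈ Finset.range d.degree, MvPowerSeries.coeff d (Sn n * a ^ (n + 2))

lemma coeff_F (a : MvPowerSeries (Fin M) ℂ) (d : Fin M →₀ ℕ) :
    MvPowerSeries.coeff d (F S Sn a) = MvPowerSeries.coeff d S +
      ∑ n ∈ Finset.range d.degree, MvPowerSeries.coeff d (Sn n * a ^ (n + 2)) := rfl

variable (hSn : ∀ n : ℕ, MvPowerSeries.constantCoeff (Sn n) = 0)

include hSn in
lemma coeff_F_congr {a b : MvPowerSeries (Fin M) ℂ} {d : Fin M →₀ ℕ}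
    (h : ∀ e : Fin M →₀ ℕ, e.degree < d.degree →
        MvPowerSeries.coeff e a = MvPowerSeries.coeff e b) :
    MvPowerSeries.coeff d (F S Sn a) = MvPowerSeries.coeff d (F S Sn b) := by
  rw [coeff_F, coeff_F]
  congr 1
  refine Finset.sum_congr rfl fun n _ => ?_
  rw [MvPowerSeries.coeff_mul, MvPowerSeries.coeff_mul]
  refine Finset.sum_congr rfl fun p hp => ?_
  rw [Finset.HasAntidiagonal.mem_antidiagonal] at hp
  by_cases h1 : p.1 = 0
  · rw [h1, MvPowerSeries.coeff_zero_eq_constantCoeff, hSn, zero_mul, zero_mul]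
  · have hdeg : p.1.degree + p.2.degree = d.degree := by rw [← deg_add, hp]
    have h3 : p.1.degree ≠ 0 := fun hh => h1 ((Finsupp.degree_eq_zero_iff p.1).1 hh)
    have h2 : p.2.degree < d.degree := by omega
    rw [coeff_pow_congr (fun e he => h e (lt_of_le_of_lt he h2)) (n + 2) p.2 le_rfl]

variable (hS : MvPowerSeries.constantCoeff S = 0)

include hS hSn in
lemma stab0 : ∀ (k : ℕ) (d : Fin M →₀ ℕ), d.degree ≤ k →
    MvPowerSeries.coeff d ((F S Sn)^[k + 1] 0) =
    MvPowerSeries.coeff d ((F S Sn)^[k] 0) := by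
  intro k
  induction k with
  | zero =>
    intro d hd
    have hd0 : d = 0 := by
      rw [← Finsupp.degree_eq_zero_iff]; omega
    subst hd0
    rw [zero_add, Function.iterate_one, Function.iterate_zero, id_eq, map_zero, coeff_F]
    simp only [map_zero, Finset.range_zero, Finset.sum_empty, add_zero]
    rw [MvPowerSeries.coeff_zero_eq_constantCoeff]
    exact hS
  | succ k ih =>
    intro d hd
    conv_lhs => rw [Function.iterate_succ_apply' (F S Sn) (k + 1)]
    conv_rhs => rw [Function.iterate_succ_apply' (F S Sn) k]
    exact coeff_F_congr S Sn hSn fun e he => ih e (by omega)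

include hS hSn in
lemma stab : ∀ (m k : ℕ) (d : Fin M →₀ ℕ), d.degree ≤ k → k + 1 ≤ m →
    MvPowerSeries.coeff d ((F S Sn)^[m] 0) =
    MvPowerSeries.coeff d ((F S Sn)^[k + 1] 0) := by
  intro m
  induction m with
  | zero => intro k d _ h; omega
  | succ m ih =>
    intro k d hd h
    by_cases hm : k + 1 ≤ m
    · rw [← ih k d hd hm]
      exact stab0 S Sn hSn hS m d (by omega)
    · have : k + 1 = m + 1 := by omega
      rw [this]

/-- The solution power series, defined coefficient-by-coefficient from the iteration. -/
noncomputable def ysol : MvPowerSeries (Fin M) ℂ :=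
  fun d => (F S Sn)^[d.degree + 1] 0 d

lemma coeff_ysol (d : Fin M →₀ ℕ) :
    MvPowerSeries.coeff d (ysol S Sn) =
    MvPowerSeries.coeff d ((F S Sn)^[d.degree + 1] 0) := rfl

include hS hSn in
lemma coeff_ysol_eq (d : Fin M →₀ ℕ) (m : ℕ) (h : d.degree + 1 ≤ m) :
    MvPowerSeries.coeff d (ysol S Sn) =
    MvPowerSeries.coeff d ((F S Sn)^[m] 0) := by
  rw [coeff_ysol, ← stab S Sn hSn hS m d.degree d le_rfl h]

include hS hSn in
lemma ysol_fixed (d : Fin M →₀ ℕ) :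
    MvPowerSeries.coeff d (F S Sn (ysol S Sn)) =
    MvPowerSeries.coeff d (ysol S Sn) := by
  have h1 : MvPowerSeries.coeff d (F S Sn (ysol S Sn)) =
      MvPowerSeries.coeff d (F S Sn ((F S Sn)^[d.degree + 1] 0)) := by
    refine coeff_F_congr S Sn hSn fun e he => ?_
    exact coeff_ysol_eq S Sn hSn hS e (d.degree + 1) (by omega)
  rw [h1, ← Function.iterate_succ_apply' (F S Sn) (d.degree + 1)]
  exact (coeff_ysol_eq S Sn hSn hS d (d.degree + 2) (by omega)).symm

include hS in
lemma ysol_constantCoeff :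
    MvPowerSeries.constantCoeff (ysol S Sn) = 0 := by
  rw [← MvPowerSeries.coeff_zero_eq_constantCoeff_apply, coeff_ysol]
  rw [show (0 : Fin M →₀ ℕ).degree + 1 = 1 by simp, Function.iterate_one, coeff_F]
  simp only [map_zero, Finset.range_zero, Finset.sum_empty, add_zero]
  rw [MvPowerSeries.coeff_zero_eq_constantCoeff]
  exact hS

end Stmt8Aux

/-- If `S` and all the `Sₙ` are small (zero constant coefficient), then the fixed
point equation `y = S + ∑_{n ≥ 2} S_{n-2} yⁿ` has a unique small solution `y`. -/
theorem stmt_8 (M : ℕ) (S : MvPowerSeries (Fin M) ℂ)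
    (Sn : ℕ → MvPowerSeries (Fin M) ℂ)
    (hS : MvPowerSeries.constantCoeff S = 0)
    (hSn : ∀ n : ℕ, MvPowerSeries.constantCoeff (Sn n) = 0) :
    ∃! y : MvPowerSeries (Fin M) ℂ,
      MvPowerSeries.constantCoeff y = 0 ∧
      Summable (fun n : ℕ => Sn n * y ^ (n + 2)) ∧
      y = S + ∑' n : ℕ, Sn n * y ^ (n + 2) := by
  classical
  letI : TopologicalSpace ℂ := ⊥
  haveI : DiscreteTopology ℂ := ⟨rfl⟩
  haveI hT2 : T2Space (MvPowerSeries (Fin M) ℂ) :=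
    inferInstanceAs (T2Space (((Fin M) →₀ ℕ) → ℂ))
  set y := Stmt8Aux.ysol S Sn with hy_def
  have hy0 : MvPowerSeries.constantCoeff y = 0 :=
    Stmt8Aux.ysol_constantCoeff S Sn hS
  -- vanishing of high-index terms in each coordinate, for any small z
  have hvan : ∀ (z : MvPowerSeries (Fin M) ℂ),
      MvPowerSeries.constantCoeff z = 0 →
      ∀ (d : (Fin M) →₀ ℕ) (n : ℕ), n ∉ Finset.range d.degree →
      MvPowerSeries.coeff d (Sn n * z ^ (n + 2)) = 0 := by
    intro z hz d n hn
    rw [Finset.mem_range, not_lt] at hn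
    exact Stmt8Aux.coeff_mul_pow_eq_zero (hSn n) hz (by omega)
  -- coordinatewise finite sums compute the infinite sums
  have hcoordSum : ∀ (z : MvPowerSeries (Fin M) ℂ),
      MvPowerSeries.constantCoeff z = 0 →
      ∀ d : (Fin M) →₀ ℕ,
      HasSum (fun n : ℕ => (Sn n * z ^ (n + 2)) d)
        (∑ n ∈ Finset.range d.degree, MvPowerSeries.coeff d (Sn n * z ^ (n + 2))) := by
    intro z hz d
    exact hasSum_sum_of_ne_finset_zero (fun n hn => hvan z hz d n hn)
  -- the main HasSum statement for y
  have hsum : HasSum (fun n : ℕ => Sn n * y ^ (n + 2)) (y - S) := by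
    have hpi : ∀ d : (Fin M) →₀ ℕ,
        HasSum (fun n : ℕ => (Sn n * y ^ (n + 2)) d) ((y - S) d) := by
      intro d
      have h2 : (y - S) d =
          ∑ n ∈ Finset.range d.degree, MvPowerSeries.coeff d (Sn n * y ^ (n + 2)) := by
        have h3 : (y - S) d = MvPowerSeries.coeff d y - MvPowerSeries.coeff d S :=
          map_sub (MvPowerSeries.coeff d) y S
        rw [h3, ← Stmt8Aux.ysol_fixed S Sn hSn hS d, Stmt8Aux.coeff_F]
        ring
      rw [h2]
      exact hcoordSum y hy0 d
    exact Pi.hasSum.2 hpi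
  refine ⟨y, ⟨hy0, ⟨y - S, hsum⟩, ?_⟩, ?_⟩
  · rw [hsum.tsum_eq]; ring
  · -- uniqueness
    rintro z ⟨hz0, hzsum, hzeq⟩
    -- z is a fixed point of F coefficientwise
    have hzF : ∀ d : (Fin M) →₀ ℕ,
        MvPowerSeries.coeff d z = MvPowerSeries.coeff d (Stmt8Aux.F S Sn z) := by
      intro d
      have h1 : HasSum (fun n : ℕ => (Sn n * z ^ (n + 2)) d)
          ((∑' n : ℕ, Sn n * z ^ (n + 2)) d) := Pi.hasSum.1 hzsum.hasSum d
      have h2 : (∑' n : ℕ, Sn n * z ^ (n + 2)) d =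
          ∑ n ∈ Finset.range d.degree, MvPowerSeries.coeff d (Sn n * z ^ (n + 2)) :=
        h1.unique (hcoordSum z hz0 d)
      have h3 : MvPowerSeries.coeff d z =
          MvPowerSeries.coeff d S + (∑' n : ℕ, Sn n * z ^ (n + 2)) d := by
        conv_lhs => rw [hzeq]
        rw [map_add]
        rfl
      rw [h3, h2, Stmt8Aux.coeff_F]
    -- strong induction on degree
    have key : ∀ N : ℕ, ∀ d : (Fin M) →₀ ℕ, d.degree ≤ N →
        MvPowerSeries.coeff d z = MvPowerSeries.coeff d y := by
      intro N
      induction N with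
      | zero =>
        intro d hd
        rw [hzF d, ← Stmt8Aux.ysol_fixed S Sn hSn hS d]
        exact Stmt8Aux.coeff_F_congr S Sn hSn fun e he => by omega
      | succ N ih =>
        intro d hd
        rw [hzF d, ← Stmt8Aux.ysol_fixed S Sn hSn hS d]
        exact Stmt8Aux.coeff_F_congr S Sn hSn fun e he => ih e (by omega)
    exact MvPowerSeries.ext fun d => key d.degree d le_rfl
end

section
/- Let β, a, b ∈ ℂ. There exists a unique formal power series φ ∈ ℂ[[t]] with zero constant coefficient satisfying the formal identity −t²·φ' + (1 − β t)·φ = t² + a·φ² + b·φ³ in ℂ[[t]], where φ' is the formal derivative. Moreover this φ also has vanishing coefficient of t, i.e. φ = Σ_{k ≥ 2} c_k t^k. -/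
open PowerSeries Finset

namespace Stmt10Aux

/-- The value of the `n`-th coefficient in terms of previous coefficients `c`. -/
noncomputable def val (β a b : ℂ) (c : ℕ → ℂ) : ℕ → ℂ
  | 0 => 0
  | n + 1 => ((n : ℂ) + β) * c n + (if n = 1 then 1 else 0)
      + a * ∑ i ∈ Finset.Ico 1 (n + 1), c i * c (n + 1 - i)
      + b * ∑ i ∈ Finset.Ico 1 (n + 1),
          c i * ∑ j ∈ Finset.Ico 1 (n + 1 - i), c j * c (n + 1 - i - j)

lemma val_congr {β a b : ℂ} {c c' : ℕ → ℂ} {n : ℕ}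
    (h : ∀ m < n, c m = c' m) : val β a b c n = val β a b c' n := by
  cases n with
  | zero => rfl
  | succ n =>
    have h1 : ∀ i ∈ Finset.Ico 1 (n + 1), c i * c (n + 1 - i) = c' i * c' (n + 1 - i) := by
      intro i hi
      obtain ⟨hi1, hi2⟩ := Finset.mem_Ico.mp hi
      rw [h i (by omega), h (n + 1 - i) (by omega)]
    have h2 : ∀ i ∈ Finset.Ico 1 (n + 1),
        c i * ∑ j ∈ Finset.Ico 1 (n + 1 - i), c j * c (n + 1 - i - j)
          = c' i * ∑ j ∈ Finset.Ico 1 (n + 1 - i), c' j * c' (n + 1 - i - j) := by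
      intro i hi
      obtain ⟨hi1, hi2⟩ := Finset.mem_Ico.mp hi
      rw [h i (by omega)]
      congr 1
      refine Finset.sum_congr rfl fun j hj => ?_
      obtain ⟨hj1, hj2⟩ := Finset.mem_Ico.mp hj
      rw [h j (by omega), h (n + 1 - i - j) (by omega)]
    simp only [val, Finset.sum_congr rfl h1, Finset.sum_congr rfl h2, h n (by omega)]

/-- Prefix approximations of the solution. -/
noncomputable def pre (β a b : ℂ) : ℕ → ℕ → ℂ
  | 0 => fun _ => 0
  | n + 1 => Function.update (pre β a b n) n (val β a b (pre β a b n) n)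

/-- The coefficients of the solution. -/
noncomputable def sol (β a b : ℂ) (n : ℕ) : ℂ := pre β a b (n + 1) n

lemma pre_eq_sol (β a b : ℂ) : ∀ n m, m < n → pre β a b n m = sol β a b m := by
  intro n
  induction n with
  | zero => omega
  | succ n ih =>
    intro m hm
    rcases eq_or_lt_of_le (Nat.lt_succ_iff.mp hm) with h | h
    · subst h; rfl
    · show Function.update (pre β a b n) n _ m = _
      rw [Function.update_of_ne (by omega), ih m h]

lemma sol_eq_val (β a b : ℂ) (n : ℕ) : sol β a b n = val β a b (sol β a b) n := by
  show Function.update (pre β a b n) n (val β a b (pre β a b n) n) n = _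
  rw [Function.update_self]
  exact val_congr fun m hm => pre_eq_sol β a b n m hm

lemma sol_zero (β a b : ℂ) : sol β a b 0 = 0 := sol_eq_val β a b 0

lemma sol_one (β a b : ℂ) : sol β a b 1 = 0 := by
  rw [sol_eq_val]
  simp [val, sol_zero]

/-- Coefficient of the square, stripped of zero endpoint terms. -/
lemma coeff_sq (f : PowerSeries ℂ) (h0 : constantCoeff f = 0) (n : ℕ) :
    coeff (n + 1) (f ^ 2)
      = ∑ i ∈ Finset.Ico 1 (n + 1), coeff i f * coeff (n + 1 - i) f := by
  rw [sq, coeff_mul, Finset.Nat.sum_antidiagonal_eq_sum_range_succ_mk]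
  rw [Finset.range_eq_Ico, Finset.sum_eq_sum_Ico_succ_bot (by omega),
    Finset.sum_Ico_succ_top (by omega)]
  simp [h0]

/-- Coefficient of the cube, stripped of zero endpoint terms. -/
lemma coeff_cube (f : PowerSeries ℂ) (h0 : constantCoeff f = 0) (n : ℕ) :
    coeff (n + 1) (f ^ 3)
      = ∑ i ∈ Finset.Ico 1 (n + 1), coeff i f *
          ∑ j ∈ Finset.Ico 1 (n + 1 - i), coeff j f * coeff (n + 1 - i - j) f := by
  have h3 : f ^ 3 = f * f ^ 2 := by ring
  rw [h3, coeff_mul, Finset.Nat.sum_antidiagonal_eq_sum_range_succ_mk]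
  rw [Finset.range_eq_Ico, Finset.sum_eq_sum_Ico_succ_bot (by omega),
    Finset.sum_Ico_succ_top (by omega)]
  have hsq0 : constantCoeff (f ^ 2) = 0 := by
    rw [map_pow, h0]; ring
  simp only [Nat.sub_self, Nat.sub_zero, coeff_zero_eq_constantCoeff, h0, hsq0,
    zero_mul, mul_zero, zero_add, add_zero]
  refine Finset.sum_congr rfl fun i hi => ?_
  obtain ⟨hi1, hi2⟩ := Finset.mem_Ico.mp hi
  congr 1
  obtain ⟨m, hm⟩ : ∃ m, n + 1 - i = m + 1 := ⟨n - i, by omega⟩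
  rw [hm, coeff_sq f h0 m]

lemma coeff_lhs (β : ℂ) (f : PowerSeries ℂ) (n : ℕ) :
    coeff (n + 1) (-(X ^ 2) * derivativeFun f + (1 - C β * X) * f)
      = coeff (n + 1) f - ((n : ℂ) + β) * coeff n f := by
  have hX2 : coeff (n + 1) ((X : PowerSeries ℂ) ^ 2 * derivativeFun f)
      = (n : ℂ) * coeff n f := by
    rw [coeff_X_pow_mul']
    cases n with
    | zero => simp
    | succ m =>
      rw [if_pos (by omega)]
      have : m + 1 + 1 - 2 = m := by omega
      rw [this, show f.derivativeFun = derivative ℂ f from rfl, coeff_derivative]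
      push_cast
      ring
  have hbX : coeff (n + 1) (C β * X * f) = β * coeff n f := by
    rw [mul_assoc, coeff_C_mul, coeff_succ_X_mul]
  rw [sub_mul, one_mul, map_add, map_sub, neg_mul, map_neg, hX2, hbX]
  ring

lemma coeff_rhs (a b : ℂ) (f : PowerSeries ℂ) (h0 : constantCoeff f = 0) (n : ℕ) :
    coeff (n + 1) (X ^ 2 + C a * f ^ 2 + C b * f ^ 3)
      = (if n = 1 then 1 else 0)
        + a * ∑ i ∈ Finset.Ico 1 (n + 1), coeff i f * coeff (n + 1 - i) f
        + b * ∑ i ∈ Finset.Ico 1 (n + 1), coeff i f *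
            ∑ j ∈ Finset.Ico 1 (n + 1 - i), coeff j f * coeff (n + 1 - i - j) f := by
  rw [map_add, map_add, coeff_C_mul, coeff_C_mul, coeff_X_pow,
    coeff_sq f h0 n, coeff_cube f h0 n]
  congr 2
  · congr 1
    simp only [eq_iff_iff]
    omega

/-- The equation is equivalent to the coefficient recursion. -/
lemma eq_iff (β a b : ℂ) (f : PowerSeries ℂ) (h0 : constantCoeff f = 0) :
    (-(X ^ 2) * derivativeFun f + (1 - C β * X) * f
        = X ^ 2 + C a * f ^ 2 + C b * f ^ 3)
      ↔ ∀ n : ℕ, coeff (n + 1) f = val β a b (fun k => coeff k f) (n + 1) := by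
  rw [PowerSeries.ext_iff]
  constructor
  · intro h n
    have := h (n + 1)
    rw [coeff_lhs, coeff_rhs a b f h0] at this
    show _ = ((n : ℂ) + β) * _ + _ + _ + _
    linear_combination this
  · intro h N
    cases N with
    | zero =>
      simp only [coeff_zero_eq_constantCoeff, map_add, map_neg, map_mul, map_sub, map_one,
        map_pow, constantCoeff_X, h0, constantCoeff_C]
      ring
    | succ n =>
      rw [coeff_lhs, coeff_rhs a b f h0]
      have := h n
      simp only [val] at this
      linear_combination this

/-- The solution power series. -/
noncomputable def phi (β a b : ℂ) : PowerSeries ℂ := PowerSeries.mk (sol β a b)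

lemma phi_coeff_fun (β a b : ℂ) : (fun k => coeff k (phi β a b)) = sol β a b := by
  funext k; exact coeff_mk k _

lemma phi_const (β a b : ℂ) : constantCoeff (phi β a b) = 0 := by
  rw [← coeff_zero_eq_constantCoeff, phi, coeff_mk]
  exact sol_zero β a b

lemma phi_eq (β a b : ℂ) :
    -(X ^ 2) * derivativeFun (phi β a b) + (1 - C β * X) * phi β a b
      = X ^ 2 + C a * phi β a b ^ 2 + C b * phi β a b ^ 3 := by
  rw [eq_iff β a b _ (phi_const β a b)]
  intro n
  simp only [phi, coeff_mk]
  exact sol_eq_val β a b (n + 1)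

lemma unique (β a b : ℂ) (f : PowerSeries ℂ) (h0 : constantCoeff f = 0)
    (heq : -(X ^ 2) * derivativeFun f + (1 - C β * X) * f
        = X ^ 2 + C a * f ^ 2 + C b * f ^ 3) :
    f = phi β a b := by
  have hrec := (eq_iff β a b f h0).mp heq
  ext N
  rw [phi]
  rw [coeff_mk]
  induction N using Nat.strong_induction_on with
  | _ N ih =>
    cases N with
    | zero =>
      rw [coeff_zero_eq_constantCoeff, h0, sol_zero]
    | succ n =>
      rw [hrec n, sol_eq_val β a b (n + 1)]
      exact val_congr fun m hm => ih m hm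

end Stmt10Aux

open Stmt10Aux
/-- There is a unique formal power series `φ ∈ ℂ[[t]]` with zero constant term
satisfying `-t² φ' + (1 - β t) φ = t² + a φ² + b φ³`; moreover its coefficient of `t`
also vanishes, i.e. `φ = ∑_{k ≥ 2} c_k t^k`.  (This is the unique formal power series
solution of `f' + (1 - β/x) f = x⁻² + a f² + b f³` under `t = 1/x`.) -/
theorem stmt_10 (β a b : ℂ) :
    (∃! φ : PowerSeries ℂ, constantCoeff φ = 0 ∧
      -(X ^ 2) * derivativeFun φ + (1 - C β * X) * φ
        = X ^ 2 + C a * φ ^ 2 + C b * φ ^ 3) ∧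
    (∀ φ : PowerSeries ℂ, constantCoeff φ = 0 →
      -(X ^ 2) * derivativeFun φ + (1 - C β * X) * φ
        = X ^ 2 + C a * φ ^ 2 + C b * φ ^ 3 →
      coeff 1 φ = 0) := by
  constructor
  · exact ⟨phi β a b, ⟨phi_const β a b, phi_eq β a b⟩,
      fun f ⟨h0, heq⟩ => unique β a b f h0 heq⟩
  · intro f h0 heq
    rw [unique β a b f h0 heq, phi, coeff_mk, sol_one]
end

section
/- Let β, a, b ∈ ℝ and x₀ > 0. Suppose f₁, f₂ : (x₀, ∞) → ℝ are differentiable, both satisfy f'(x) + (1 − β/x) f(x) = x^{−2} + a f(x)² + b f(x)³ for all x > x₀, and both tend to 0 as x → ∞. Then the limit C := lim_{x→∞} (f₁(x) − f₂(x)) eˣ x^{−β} exists in ℝ (so f₁ − f₂ = C e^{−x} x^{β}(1 + o(1))), and if C = 0 then f₁ = f₂ on (x₁, ∞) for some x₁ ≥ x₀. -/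
open Filter Real

section StmtAux
open MeasureTheory

lemma core_ineq (β a b x u i δ : ℝ) (hδ1 : δ ≤ 1) (hδab : (|a| + |b|) * δ ≤ 1/8)
    (hu : |u| ≤ δ) (hx : 8 * (|β| + 1) ≤ x) (hxpos : 0 < x) (hi : i = (x^2)⁻¹) :
    2 * u * (i + a * u ^ 2 + b * u ^ 3 - (1 - β / x) * u) + u ^ 2 ≤ 2 * i ^ 2 := by
  have hipos : 0 < i := by rw [hi]; positivity
  have h1 : 2 * u * i ≤ u ^ 2 / 2 + 2 * i ^ 2 := by nlinarith [sq_nonneg (u - 2 * i)]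
  have hu2δ : u ^ 2 ≤ δ * |u| := by nlinarith [abs_nonneg u, sq_abs u]
  have h3 : a * u ^ 3 ≤ |a| * δ * u ^ 2 := by
    have hau : a * u ≤ |a| * δ := by
      have h := le_abs_self (a * u)
      rw [abs_mul] at h
      nlinarith [abs_nonneg a]
    calc a * u ^ 3 = (a * u) * u ^ 2 := by ring
      _ ≤ (|a| * δ) * u ^ 2 := mul_le_mul_of_nonneg_right hau (sq_nonneg u)
  have h4 : b * u ^ 4 ≤ |b| * δ * u ^ 2 := by
    have hb2 : b * u ^ 2 ≤ |b| * δ := by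
      have hud : u ^ 2 ≤ δ := by nlinarith [abs_nonneg u, sq_abs u]
      calc b * u ^ 2 ≤ |b| * u ^ 2 := mul_le_mul_of_nonneg_right (le_abs_self b) (sq_nonneg u)
        _ ≤ |b| * δ := mul_le_mul_of_nonneg_left hud (abs_nonneg b)
    calc b * u ^ 4 = (b * u ^ 2) * u ^ 2 := by ring
      _ ≤ (|b| * δ) * u ^ 2 := mul_le_mul_of_nonneg_right hb2 (sq_nonneg u)
  have h5 : (β / x) * u ^ 2 ≤ (1/8) * u ^ 2 := by
    have hb : β / x ≤ 1/8 := by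
      rw [div_le_iff₀ hxpos]
      nlinarith [le_abs_self β, abs_nonneg β]
    exact mul_le_mul_of_nonneg_right hb (sq_nonneg u)
  have h6 : (|a| * δ + |b| * δ) * u ^ 2 ≤ (1/8) * u ^ 2 :=
    mul_le_mul_of_nonneg_right (by linarith) (sq_nonneg u)
  nlinarith [h1, h3, h4, h5, h6]

lemma aux_integrable (β a b x₀ : ℝ) (hx₀ : 0 < x₀) (f : ℝ → ℝ)
    (h : ∀ x ∈ Set.Ioi x₀, HasDerivAt f
      ((x ^ 2)⁻¹ + a * f x ^ 2 + b * f x ^ 3 - (1 - β / x) * f x) x)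
    (hl : Tendsto f atTop (nhds 0)) (y : ℝ) :
    ∃ x₂, y ≤ x₂ ∧ x₀ < x₂ ∧ MeasureTheory.IntegrableOn f (Set.Ioi x₂) := by
  set δ : ℝ := (8 * (|a| + |b|) + 1)⁻¹ with hδdef
  have hδpos : 0 < δ := by positivity
  have hδ1 : δ ≤ 1 := by
    rw [hδdef, inv_le_one_iff₀]; right; nlinarith [abs_nonneg a, abs_nonneg b]
  have hδab : (|a| + |b|) * δ ≤ 1 / 8 := by
    rw [hδdef, mul_inv_le_iff₀ (by positivity)]
    nlinarith [abs_nonneg a, abs_nonneg b]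
  obtain ⟨N, hN⟩ := (Metric.tendsto_atTop.mp hl δ hδpos)
  set x₂ : ℝ := max N (max (x₀ + 1) (max 16 (max (8 * (|β| + 1)) y))) with hx₂def
  have hx₂N : N ≤ x₂ := le_max_left _ _
  have hx₂0 : x₀ + 1 ≤ x₂ := le_trans (le_max_left _ _) (le_max_right _ _)
  have hx₂16 : (16:ℝ) ≤ x₂ :=
    le_trans (le_trans (le_max_left _ _) (le_max_right _ _)) (le_max_right _ _)
  have hx₂β : 8 * (|β| + 1) ≤ x₂ :=
    le_trans (le_trans (le_trans (le_max_left _ _) (le_max_right _ _)) (le_max_right _ _))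
      (le_max_right _ _)
  have hx₂y : y ≤ x₂ :=
    le_trans (le_trans (le_trans (le_max_right _ _) (le_max_right _ _)) (le_max_right _ _))
      (le_max_right _ _)
  have hx₂x₀ : x₀ < x₂ := by linarith
  have hx₂pos : (0:ℝ) < x₂ := by linarith
  have hsmall : ∀ x, x₂ ≤ x → |f x| ≤ δ := by
    intro x hx
    have := hN x (le_trans hx₂N hx)
    rw [Real.dist_eq, sub_zero] at this
    exact this.le
  refine ⟨x₂, hx₂y, hx₂x₀, ?_⟩
  -- primitive J
  set J : ℝ → ℝ := fun u => ∫ s in x₂..u, 2 * (s ^ 4)⁻¹ * Real.exp s with hJdef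
  have hJd : ∀ x ∈ Set.Ioi (0:ℝ), HasDerivAt J (2 * (x ^ 4)⁻¹ * Real.exp x) x := by
    intro x hx
    have hc : ∀ s ∈ Set.Ioi (0:ℝ), ContinuousAt (fun s : ℝ => 2 * (s ^ 4)⁻¹ * Real.exp s) s := by
      intro s hs
      exact (continuousAt_const.mul (((continuous_pow 4).continuousAt).inv₀
        (pow_ne_zero 4 (ne_of_gt hs)))).mul Real.continuous_exp.continuousAt
    have hco : ContinuousOn (fun s : ℝ => 2 * (s ^ 4)⁻¹ * Real.exp s) (Set.Ioi 0) :=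
      continuousOn_of_forall_continuousAt hc
    refine intervalIntegral.integral_hasDerivAt_right ?_ ?_ (hc x hx)
    · refine (hco.mono ?_).intervalIntegrable
      intro s hs
      simp only [Set.uIcc_eq_union, Set.mem_union, Set.mem_Icc] at hs
      rcases hs with hs | hs <;> simp only [Set.mem_Ioi] <;>
        [linarith [hs.1]; linarith [hs.1, hx.out]]
    · exact ContinuousAt.stronglyMeasurableAtFilter isOpen_Ioi hc x hx
  -- G and its derivative
  set G : ℝ → ℝ := fun x => f x ^ 2 * Real.exp x - J x with hGdef
  have hGd : ∀ x, x₂ ≤ x → HasDerivAt G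
      ((2 * f x * ((x ^ 2)⁻¹ + a * f x ^ 2 + b * f x ^ 3 - (1 - β / x) * f x) + f x ^ 2)
          * Real.exp x - 2 * (x ^ 4)⁻¹ * Real.exp x) x := by
    intro x hx
    have hx0 : x₀ < x := by linarith
    have hxp : (0:ℝ) < x := by linarith
    have hf := h x hx0
    have h1 := ((hf.pow 2).mul (Real.hasDerivAt_exp x)).sub (hJd x hxp)
    refine h1.congr_deriv ?_
    simp only [Pi.pow_apply]; ring
  have hGanti : AntitoneOn G (Set.Ici x₂) := by
    refine antitoneOn_of_deriv_nonpos (convex_Ici x₂)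
      (fun x hx => (hGd x hx).continuousAt.continuousWithinAt) ?_ ?_
    · rw [interior_Ici]
      exact fun x hx => ((hGd x hx.out.le).differentiableAt).differentiableWithinAt
    · intro x hx
      rw [interior_Ici] at hx
      rw [(hGd x hx.out.le).deriv]
      have hxp : (0:ℝ) < x := by linarith [hx.out]
      have hcore := core_ineq β a b x (f x) ((x^2)⁻¹) δ hδ1 hδab (hsmall x hx.out.le)
        (by linarith [hx.out]) hxp rfl
      have h44 : ((x:ℝ) ^ 4)⁻¹ = ((x ^ 2)⁻¹) ^ 2 := by
        rw [show (x:ℝ)^4 = (x^2)^2 by ring, inv_pow]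
      have hE := (Real.exp_pos x).le
      nlinarith [mul_le_mul_of_nonneg_right hcore hE]
  have hGbound : ∀ x, x₂ ≤ x → f x ^ 2 * Real.exp x ≤ f x₂ ^ 2 * Real.exp x₂ + J x := by
    intro x hx
    have hGx := hGanti Set.self_mem_Ici hx hx
    have hJ2 : J x₂ = 0 := intervalIntegral.integral_same
    simp only [hGdef, hJ2, sub_zero] at hGx
    linarith
  -- K monotone: J x ≤ 4 x⁻⁴ eˣ
  set K : ℝ → ℝ := fun x => 4 * (x ^ 4)⁻¹ * Real.exp x - J x with hKdef
  have hKd : ∀ x, x₂ ≤ x → HasDerivAt K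
      (4 * (-(4 * x ^ 3) / (x ^ 4) ^ 2 * Real.exp x + (x ^ 4)⁻¹ * Real.exp x)
        - 2 * (x ^ 4)⁻¹ * Real.exp x) x := by
    intro x hx
    have hxp : (0:ℝ) < x := by linarith
    have hinv := (hasDerivAt_pow 4 x).inv (pow_ne_zero 4 hxp.ne')
    have h1 := ((hinv.mul (Real.hasDerivAt_exp x)).const_mul (4:ℝ)).sub (hJd x hxp)
    refine (h1.congr_deriv ?_).congr_of_eventuallyEq (Filter.Eventually.of_forall fun t => ?_)
    · simp only [Pi.inv_apply, Nat.cast_ofNat]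
    · simp only [hKdef, Pi.mul_apply, Pi.sub_apply, Pi.inv_apply]; ring
  have hKmono : MonotoneOn K (Set.Ici x₂) := by
    refine monotoneOn_of_deriv_nonneg (convex_Ici x₂)
      (fun x hx => (hKd x hx).continuousAt.continuousWithinAt) ?_ ?_
    · rw [interior_Ici]
      exact fun x hx => ((hKd x hx.out.le).differentiableAt).differentiableWithinAt
    · intro x hx
      rw [interior_Ici] at hx
      rw [(hKd x hx.out.le).deriv]
      have hxp : (0:ℝ) < x := by linarith [hx.out]
      have hx16 : (16:ℝ) ≤ x := by linarith [hx.out]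
      have hx4 : (0:ℝ) < x ^ 4 := by positivity
      have hs : ((x ^ 4:ℝ) ^ 2)⁻¹ * x ^ 4 = (x ^ 4)⁻¹ := by
        rw [pow_two, mul_inv_rev, mul_assoc, inv_mul_cancel₀ hx4.ne', mul_one]
      have hspos : (0:ℝ) < ((x ^ 4) ^ 2)⁻¹ := by positivity
      have hE := Real.exp_pos x
      have key : 0 ≤ ((x ^ 4) ^ 2)⁻¹ * Real.exp x * x ^ 3 * (2 * x - 16) :=
        mul_nonneg (by positivity) (by linarith)
      rw [div_eq_mul_inv]
      nlinarith [key, hs, hE]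
  have hJbound : ∀ x, x₂ ≤ x → J x ≤ 4 * (x ^ 4)⁻¹ * Real.exp x := by
    intro x hx
    have hKx := hKmono Set.self_mem_Ici hx hx
    have hJ2 : J x₂ = 0 := intervalIntegral.integral_same
    have hK2 : 0 ≤ 4 * (x₂ ^ 4)⁻¹ * Real.exp x₂ := by positivity
    simp only [hKdef, hJ2, sub_zero] at hKx
    linarith
  -- pointwise square bound
  have hW : ∀ x, x₂ ≤ x →
      f x ^ 2 ≤ (f x₂ ^ 2 * Real.exp x₂) * Real.exp (-x) + 4 * (x ^ 4)⁻¹ := by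
    intro x hx
    have hEE : Real.exp x * Real.exp (-x) = 1 := by
      rw [← Real.exp_add]; simp
    have h1 : f x ^ 2 * Real.exp x ≤ f x₂ ^ 2 * Real.exp x₂ + 4 * (x ^ 4)⁻¹ * Real.exp x := by
      linarith [hGbound x hx, hJbound x hx]
    calc f x ^ 2 = f x ^ 2 * (Real.exp x * Real.exp (-x)) := by rw [hEE, mul_one]
      _ = f x ^ 2 * Real.exp x * Real.exp (-x) := by ring
      _ ≤ (f x₂ ^ 2 * Real.exp x₂ + 4 * (x ^ 4)⁻¹ * Real.exp x) * Real.exp (-x) :=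
          mul_le_mul_of_nonneg_right h1 (Real.exp_pos (-x)).le
      _ = (f x₂ ^ 2 * Real.exp x₂) * Real.exp (-x)
            + 4 * (x ^ 4)⁻¹ * (Real.exp x * Real.exp (-x)) := by ring
      _ = (f x₂ ^ 2 * Real.exp x₂) * Real.exp (-x) + 4 * (x ^ 4)⁻¹ := by rw [hEE, mul_one]
  -- absolute value bound
  set M : ℝ := Real.sqrt (f x₂ ^ 2 * Real.exp x₂) with hMdef
  have hMnn : 0 ≤ M := Real.sqrt_nonneg _
  have hM2 : M ^ 2 = f x₂ ^ 2 * Real.exp x₂ := Real.sq_sqrt (by positivity)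
  have habs : ∀ x, x₂ ≤ x → |f x| ≤ M * Real.exp (-2⁻¹ * x) + 2 * (x ^ 2)⁻¹ := by
    intro x hx
    have hxp : (0:ℝ) < x := by linarith
    have hE2 : Real.exp (-2⁻¹ * x) ^ 2 = Real.exp (-x) := by
      rw [sq, ← Real.exp_add]; congr 1; ring
    have h44 : ((x:ℝ) ^ 4)⁻¹ = ((x ^ 2)⁻¹) ^ 2 := by
      rw [show (x:ℝ)^4 = (x^2)^2 by ring, inv_pow]
    have hb0 : 0 ≤ M * Real.exp (-2⁻¹ * x) + 2 * (x ^ 2)⁻¹ := by positivity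
    have hcross : 0 ≤ (M * Real.exp (-2⁻¹ * x)) * (2 * (x ^ 2)⁻¹) := by positivity
    have hsq : f x ^ 2 ≤ (M * Real.exp (-2⁻¹ * x) + 2 * (x ^ 2)⁻¹) ^ 2 := by
      nlinarith [hW x hx, hM2, hE2, h44, hcross]
    calc |f x| = Real.sqrt (f x ^ 2) := (Real.sqrt_sq_eq_abs _).symm
      _ ≤ Real.sqrt ((M * Real.exp (-2⁻¹ * x) + 2 * (x ^ 2)⁻¹) ^ 2) := Real.sqrt_le_sqrt hsq
      _ = M * Real.exp (-2⁻¹ * x) + 2 * (x ^ 2)⁻¹ := Real.sqrt_sq hb0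
  -- integrable comparison function
  have hint : IntegrableOn (fun x => M * Real.exp (-2⁻¹ * x) + 2 * (x ^ 2)⁻¹) (Set.Ioi x₂) := by
    refine Integrable.add ?_ ?_
    · exact (exp_neg_integrableOn_Ioi x₂ (by norm_num : (0:ℝ) < 2⁻¹)).const_mul M
    · have h2 := integrableOn_Ioi_rpow_of_lt (by norm_num : (-2:ℝ) < -1) hx₂pos
      have h3 : IntegrableOn (fun t : ℝ => (t ^ 2)⁻¹) (Set.Ioi x₂) := by
        refine h2.congr_fun ?_ measurableSet_Ioi
        intro t ht
        have htp : (0:ℝ) < t := lt_trans hx₂pos ht.out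
        show (t:ℝ) ^ (-2:ℝ) = (t ^ 2)⁻¹
        rw [show (-2:ℝ) = -((2:ℕ):ℝ) by norm_num, Real.rpow_neg htp.le, Real.rpow_natCast]
      exact h3.const_mul 2
  have hcont : ContinuousOn f (Set.Ioi x₂) := by
    intro x hx
    exact ((h x (by exact lt_trans hx₂x₀ hx.out)).continuousAt).continuousWithinAt
  refine Integrable.mono' hint (hcont.aestronglyMeasurable measurableSet_Ioi) ?_
  rw [ae_restrict_iff' measurableSet_Ioi]
  exact ae_of_all _ fun x hx => by
    simpa [Real.norm_eq_abs] using habs x (le_of_lt hx.out)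

end StmtAux

section StmtMain
open MeasureTheory

/-- Any two solutions of `f' + (1 - β/x) f = x⁻² + a f² + b f³` on `(x₀, ∞)` which
tend to `0` at `+∞` differ by `C e^{-x} x^β (1 + o(1))`: the limit
`C = lim (f₁ - f₂) eˣ x^{-β}` exists, and if `C = 0` the two solutions coincide
beyond some point. -/
theorem stmt_11 (β a b x₀ : ℝ) (hx₀ : 0 < x₀) (f₁ f₂ : ℝ → ℝ)
    (h₁ : ∀ x ∈ Set.Ioi x₀, HasDerivAt f₁
      ((x ^ 2)⁻¹ + a * f₁ x ^ 2 + b * f₁ x ^ 3 - (1 - β / x) * f₁ x) x)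
    (h₂ : ∀ x ∈ Set.Ioi x₀, HasDerivAt f₂
      ((x ^ 2)⁻¹ + a * f₂ x ^ 2 + b * f₂ x ^ 3 - (1 - β / x) * f₂ x) x)
    (hl₁ : Tendsto f₁ atTop (nhds 0)) (hl₂ : Tendsto f₂ atTop (nhds 0)) :
    ∃ C : ℝ,
      Tendsto (fun x => (f₁ x - f₂ x) * Real.exp x * x ^ (-β)) atTop (nhds C) ∧
      (C = 0 → ∃ x₁ : ℝ, x₀ ≤ x₁ ∧ ∀ x ∈ Set.Ioi x₁, f₁ x = f₂ x) := by
  obtain ⟨x₂, hx₂y, hx₂x₀, hi₁⟩ := aux_integrable β a b x₀ hx₀ f₁ h₁ hl₁ x₀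
  obtain ⟨x₃, hx₃y, hx₃x₀, hi₂⟩ := aux_integrable β a b x₀ hx₀ f₂ h₂ hl₂ x₀
  obtain ⟨N₁, hN₁⟩ := Metric.tendsto_atTop.mp hl₁ 1 one_pos
  obtain ⟨N₂, hN₂⟩ := Metric.tendsto_atTop.mp hl₂ 1 one_pos
  set x₁ : ℝ := max (max N₁ N₂) (max x₂ x₃) with hx₁def
  have hx₁x₂ : x₂ ≤ x₁ := le_trans (le_max_left _ _) (le_max_right _ _)
  have hx₁x₃ : x₃ ≤ x₁ := le_trans (le_max_right _ _) (le_max_right _ _)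
  have hx₁N₁ : N₁ ≤ x₁ := le_trans (le_max_left _ _) (le_max_left _ _)
  have hx₁N₂ : N₂ ≤ x₁ := le_trans (le_max_right _ _) (le_max_left _ _)
  have hx₁x₀ : x₀ < x₁ := lt_of_lt_of_le hx₂x₀ hx₁x₂
  have hx₁pos : 0 < x₁ := lt_trans hx₀ hx₁x₀
  have hb₁ : ∀ x, x₁ ≤ x → |f₁ x| ≤ 1 := fun x hx => by
    have := hN₁ x (le_trans hx₁N₁ hx); rw [Real.dist_eq, sub_zero] at this; exact this.le
  have hb₂ : ∀ x, x₁ ≤ x → |f₂ x| ≤ 1 := fun x hx => by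
    have := hN₂ x (le_trans hx₁N₂ hx); rw [Real.dist_eq, sub_zero] at this; exact this.le
  set q : ℝ → ℝ := fun x => a * (f₁ x + f₂ x) + b * (f₁ x ^ 2 + f₁ x * f₂ x + f₂ x ^ 2)
    with hqdef
  have hc₁ : ContinuousOn f₁ (Set.Ioi x₀) :=
    fun x hx => (h₁ x hx).continuousAt.continuousWithinAt
  have hc₂ : ContinuousOn f₂ (Set.Ioi x₀) :=
    fun x hx => (h₂ x hx).continuousAt.continuousWithinAt
  have hqc : ContinuousOn q (Set.Ioi x₀) := by
    apply ContinuousOn.add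
    · exact continuousOn_const.mul (hc₁.add hc₂)
    · exact continuousOn_const.mul (((hc₁.pow 2).add (hc₁.mul hc₂)).add (hc₂.pow 2))
  have hqint : IntegrableOn q (Set.Ioi x₁) := by
    have hg : IntegrableOn (fun x => (|a| + 2 * |b|) * (|f₁ x| + |f₂ x|)) (Set.Ioi x₁) :=
      (((hi₁.mono_set (Set.Ioi_subset_Ioi hx₁x₂)).abs.add
        ((hi₂.mono_set (Set.Ioi_subset_Ioi hx₁x₃)).abs)).const_mul _)
    refine Integrable.mono' hg
      ((hqc.mono (Set.Ioi_subset_Ioi hx₁x₀.le)).aestronglyMeasurable measurableSet_Ioi) ?_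
    rw [ae_restrict_iff' measurableSet_Ioi]
    refine ae_of_all _ fun x hx => ?_
    have h1 := hb₁ x hx.out.le
    have h2 := hb₂ x hx.out.le
    have e1 : |f₁ x + f₂ x| ≤ |f₁ x| + |f₂ x| := abs_add_le _ _
    have e2 : |f₁ x ^ 2 + f₁ x * f₂ x + f₂ x ^ 2|
        ≤ |f₁ x| ^ 2 + |f₁ x| * |f₂ x| + |f₂ x| ^ 2 := by
      calc |f₁ x ^ 2 + f₁ x * f₂ x + f₂ x ^ 2|
          ≤ |f₁ x ^ 2 + f₁ x * f₂ x| + |f₂ x ^ 2| := abs_add_le _ _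
        _ ≤ |f₁ x ^ 2| + |f₁ x * f₂ x| + |f₂ x ^ 2| := by
            linarith [abs_add_le (f₁ x ^ 2) (f₁ x * f₂ x)]
        _ = |f₁ x| ^ 2 + |f₁ x| * |f₂ x| + |f₂ x| ^ 2 := by
            rw [abs_mul, abs_pow, abs_pow]
    have e3 : |f₁ x| ^ 2 + |f₁ x| * |f₂ x| + |f₂ x| ^ 2 ≤ 2 * (|f₁ x| + |f₂ x|) := by
      nlinarith [abs_nonneg (f₁ x), abs_nonneg (f₂ x)]
    rw [Real.norm_eq_abs]
    calc |q x| ≤ |a * (f₁ x + f₂ x)| + |b * (f₁ x ^ 2 + f₁ x * f₂ x + f₂ x ^ 2)| := abs_add_le _ _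
      _ = |a| * |f₁ x + f₂ x| + |b| * |f₁ x ^ 2 + f₁ x * f₂ x + f₂ x ^ 2| := by
          rw [abs_mul, abs_mul]
      _ ≤ (|a| + 2 * |b|) * (|f₁ x| + |f₂ x|) := by
          nlinarith [abs_nonneg a, abs_nonneg b, abs_nonneg (f₁ x), abs_nonneg (f₂ x),
            mul_le_mul_of_nonneg_left e1 (abs_nonneg a),
            mul_le_mul_of_nonneg_left (e2.trans e3) (abs_nonneg b)]
  set Q : ℝ → ℝ := fun u => ∫ t in x₁..u, q t with hQdef
  have hQd : ∀ x ∈ Set.Ioi x₁, HasDerivAt Q (q x) x := by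
    intro x hx
    have hxx₀ : x ∈ Set.Ioi x₀ := Set.mem_Ioi.mpr (lt_trans hx₁x₀ hx.out)
    refine intervalIntegral.integral_hasDerivAt_right ?_
      (ContinuousOn.stronglyMeasurableAtFilter isOpen_Ioi hqc x hxx₀)
      (hqc.continuousAt (isOpen_Ioi.mem_nhds hxx₀))
    refine (hqc.mono ?_).intervalIntegrable
    intro s hs
    simp only [Set.uIcc_eq_union, Set.mem_union, Set.mem_Icc] at hs
    rcases hs with hs | hs <;> simp only [Set.mem_Ioi] <;>
      [linarith [hs.1, hx₁x₀]; linarith [hs.1, hx.out, hx₁x₀]]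
  set L : ℝ := ∫ t in Set.Ioi x₁, q t with hLdef
  have hQlim : Tendsto Q atTop (nhds L) :=
    intervalIntegral_tendsto_integral_Ioi x₁ hqint tendsto_id
  have hgd : ∀ x ∈ Set.Ioi x₁, HasDerivAt (fun x => f₁ x - f₂ x)
      (q x * (f₁ x - f₂ x) - (1 - β / x) * (f₁ x - f₂ x)) x := by
    intro x hx
    have hxx₀ : x ∈ Set.Ioi x₀ := Set.mem_Ioi.mpr (lt_trans hx₁x₀ hx.out)
    have hd := (h₁ x hxx₀).sub (h₂ x hxx₀)
    refine hd.congr_deriv ?_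
    simp only [hqdef]; ring
  set ψ : ℝ → ℝ := fun x => (f₁ x - f₂ x) * Real.exp x * x ^ (-β) * Real.exp (-(Q x))
    with hψdef
  have hψd : ∀ x ∈ Set.Ioi x₁, HasDerivAt ψ 0 x := by
    intro x hx
    have hxp : (0:ℝ) < x := lt_trans hx₁pos hx.out
    have hR := Real.hasDerivAt_rpow_const (x := x) (p := -β) (Or.inl hxp.ne')
    have hEQ : HasDerivAt (fun x => Real.exp (-(Q x))) (Real.exp (-(Q x)) * (-(q x))) x :=
      (Real.hasDerivAt_exp _).comp x ((hQd x hx).neg)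
    have hprod := (((hgd x hx).mul (Real.hasDerivAt_exp x)).mul hR).mul hEQ
    refine hprod.congr_deriv ?_
    have hpow : x ^ (-β - 1) = x ^ (-β) * x⁻¹ := by
      rw [Real.rpow_sub hxp, Real.rpow_one, div_eq_mul_inv]
    rw [hpow]
    field_simp
    simp only [Pi.mul_apply]
    ring
  set p0 : ℝ := x₁ + 1 with hp0def
  have hψconst : ∀ x ∈ Set.Ioi x₁, ψ x = ψ p0 := by
    intro yv hy
    rcases le_total yv p0 with hc | hc
    · have := constant_of_has_deriv_right_zero (f := ψ) (a := yv) (b := p0)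
        (fun t ht => (hψd t (Set.mem_Ioi.mpr (lt_of_lt_of_le hy.out ht.1))).continuousAt.continuousWithinAt)
        (fun t ht => (hψd t (Set.mem_Ioi.mpr (lt_of_lt_of_le hy.out ht.1))).hasDerivWithinAt)
        p0 ⟨hc, le_refl _⟩
      exact this.symm
    · exact constant_of_has_deriv_right_zero (f := ψ) (a := p0) (b := yv)
        (fun t ht => (hψd t (Set.mem_Ioi.mpr (lt_of_lt_of_le (by linarith) ht.1))).continuousAt.continuousWithinAt)
        (fun t ht => (hψd t (Set.mem_Ioi.mpr (lt_of_lt_of_le (by linarith) ht.1))).hasDerivWithinAt)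
        yv ⟨hc, le_refl _⟩
  set Kc : ℝ := ψ p0 with hKcdef
  have hrep : ∀ x ∈ Set.Ioi x₁, (f₁ x - f₂ x) * Real.exp x * x ^ (-β) = Kc * Real.exp (Q x) := by
    intro x hx
    have h := hψconst x hx
    simp only [hψdef] at h
    calc (f₁ x - f₂ x) * Real.exp x * x ^ (-β)
        = (f₁ x - f₂ x) * Real.exp x * x ^ (-β) * (Real.exp (-(Q x)) * Real.exp (Q x)) := by
          rw [← Real.exp_add]; simp
      _ = ((f₁ x - f₂ x) * Real.exp x * x ^ (-β) * Real.exp (-(Q x))) * Real.exp (Q x) := by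
          ring
      _ = Kc * Real.exp (Q x) := by rw [h]
  refine ⟨Kc * Real.exp L, ?_, ?_⟩
  · have h1 : Tendsto (fun x => Kc * Real.exp (Q x)) atTop (nhds (Kc * Real.exp L)) :=
      ((Real.continuous_exp.tendsto L).comp hQlim).const_mul Kc
    refine h1.congr' ?_
    filter_upwards [eventually_gt_atTop x₁] with x hx
    exact (hrep x hx).symm
  · intro hC0
    have hKc : Kc = 0 := by
      rcases mul_eq_zero.mp hC0 with h | h
      · exact h
      · exact absurd h (Real.exp_ne_zero L)
    refine ⟨x₁, hx₁x₀.le, fun x hx => ?_⟩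
    have h := hrep x hx
    rw [hKc, zero_mul] at h
    have hxp : (0:ℝ) < x := lt_trans hx₁pos hx.out
    have hR : x ^ (-β) ≠ 0 := (Real.rpow_pos_of_pos hxp _).ne'
    have hE : Real.exp x ≠ 0 := Real.exp_ne_zero x
    have hg0 : f₁ x - f₂ x = 0 := by
      rcases mul_eq_zero.mp h with h' | h'
      · rcases mul_eq_zero.mp h' with h'' | h''
        · exact h''
        · exact absurd h'' hE
      · exact absurd h' hR
    linarith

end StmtMain
end

section
/- Let a, b ≥ 0. For every ε ∈ (0,1) there exists δ > 0 such that: whenever λ ∈ [0, δ] and (x_k)_{k ≥ 1} is a sequence of nonnegative reals with x₁ ≤ δ and satisfying, for every k ≥ 2, x_k ≤ λ x_k + a Σ_{k₁+k₂ = k, k₁,k₂ ≥ 1} x_{k₁} x_{k₂} + b Σ_{k₁+k₂+k₃ = k, k₁,k₂,k₃ ≥ 1} x_{k₁} x_{k₂} x_{k₃}, then x_k ≤ ε^k for all k ≥ 1. -/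
open Finset


private lemma sum_inv_sq_le (n : ℕ) : ∑ j ∈ Finset.Icc 1 n, (1:ℝ)/(j:ℝ)^2 ≤ 2 := by
  have H : ∀ m : ℕ, 1 ≤ m → ∑ j ∈ Finset.Icc 1 m, (1:ℝ)/(j:ℝ)^2 ≤ 2 - 1/(m:ℝ) := by
    intro m hm
    induction m, hm using Nat.le_induction with
    | base => norm_num
    | succ m hm ih =>
      rw [Finset.sum_Icc_succ_top (by omega : 1 ≤ m + 1)]
      have hm' : (1:ℝ) ≤ (m:ℝ) := by exact_mod_cast hm
      have key : (1:ℝ)/((m:ℝ)+1)^2 ≤ 1/(m:ℝ) - 1/((m:ℝ)+1) := by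
        rw [div_sub_div _ _ (by positivity) (by positivity),
          div_le_div_iff₀ (by positivity) (by positivity)]
        nlinarith
      push_cast
      linarith
  cases Nat.eq_zero_or_pos n with
  | inl h => subst h; simp
  | inr h =>
    have h1 := H n h
    have h2 : (0:ℝ) < (n:ℝ) := by exact_mod_cast h
    have : (0:ℝ) < 1/(n:ℝ) := by positivity
    linarith

private lemma sum_comp_le {α β : Type*} [DecidableEq β] {S : Finset α} {T : Finset β}
    (π : α → β) (g : β → ℝ) (hg : ∀ b ∈ T, 0 ≤ g b)
    (hinj : ∀ p ∈ S, ∀ q ∈ S, π p = π q → p = q)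
    (hmap : ∀ p ∈ S, π p ∈ T) :
    ∑ p ∈ S, g (π p) ≤ ∑ q ∈ T, g q := by
  rw [← Finset.sum_image hinj]
  apply Finset.sum_le_sum_of_subset_of_nonneg
  · intro b hb
    obtain ⟨p, hp, rfl⟩ := Finset.mem_image.mp hb
    exact hmap p hp
  · intro b hb _
    exact hg b hb

private lemma key2 (u v K : ℝ) (hu : 0 < u) (hv : 0 < v) (hK : u + v = K) :
    1/(u^2*v^2) ≤ 2/K^2 * (1/u^2 + 1/v^2) := by
  subst hK
  have hu' := hu.ne'
  have hv' := hv.ne'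
  have hD : (0:ℝ) < (u+v)^2 * (u^2*v^2) := by positivity
  have e1 : 1/(u^2*v^2) = (u+v)^2/((u+v)^2*(u^2*v^2)) := by
    field_simp
  have e2 : 2/(u+v)^2 * (1/u^2 + 1/v^2) = (2*(u^2+v^2))/((u+v)^2*(u^2*v^2)) := by
    field_simp
    ring
  rw [e1, e2]
  gcongr
  nlinarith [sq_nonneg (u - v)]

private lemma key3 (u v w K : ℝ) (hu : 0 < u) (hv : 0 < v) (hw : 0 < w) (hK : u + v + w = K) :
    1/(u^2*v^2*w^2) ≤ 3/K^2 * (1/(v^2*w^2) + 1/(u^2*w^2) + 1/(u^2*v^2)) := by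
  subst hK
  have hu' := hu.ne'
  have hv' := hv.ne'
  have hw' := hw.ne'
  have hD : (0:ℝ) < (u+v+w)^2 * (u^2*v^2*w^2) := by positivity
  have e1 : 1/(u^2*v^2*w^2) = (u+v+w)^2/((u+v+w)^2*(u^2*v^2*w^2)) := by
    field_simp
  have e2 : 3/(u+v+w)^2 * (1/(v^2*w^2) + 1/(u^2*w^2) + 1/(u^2*v^2))
      = (3*(u^2+v^2+w^2))/((u+v+w)^2*(u^2*v^2*w^2)) := by
    field_simp
  rw [e1, e2]
  gcongr
  nlinarith [sq_nonneg (u - v), sq_nonneg (u - w), sq_nonneg (v - w)]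

private lemma sum_sq_pairs_le (k : ℕ) :
    ∑ q ∈ Finset.Icc 1 k ×ˢ Finset.Icc 1 k, (1:ℝ)/((q.1:ℝ)^2*(q.2:ℝ)^2) ≤ 4 := by
  have e : ∑ q ∈ Finset.Icc 1 k ×ˢ Finset.Icc 1 k, (1:ℝ)/((q.1:ℝ)^2*(q.2:ℝ)^2)
      = (∑ j ∈ Finset.Icc 1 k, (1:ℝ)/(j:ℝ)^2)^2 := by
    rw [sq, Finset.sum_mul_sum, Finset.sum_product]
    exact Finset.sum_congr rfl fun i _ => Finset.sum_congr rfl fun j _ => by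
      rw [div_mul_div_comm, one_mul]
  rw [e]
  have h1 := sum_inv_sq_le k
  have h2 : (0:ℝ) ≤ ∑ j ∈ Finset.Icc 1 k, (1:ℝ)/(j:ℝ)^2 := by positivity
  nlinarith

/-- Majorization lemma: for every `ε ∈ (0,1)` there is `δ > 0` such that any
nonnegative sequence with `x₁ ≤ δ` satisfying, for `k ≥ 2`,
`x_k ≤ λ x_k + a ∑_{k₁+k₂=k, kᵢ≥1} x_{k₁} x_{k₂} + b ∑_{k₁+k₂+k₃=k, kᵢ≥1} x_{k₁} x_{k₂} x_{k₃}`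
with `0 ≤ λ ≤ δ`, obeys the geometric bound `x_k ≤ ε^k` for all `k ≥ 1`. -/
theorem stmt_17 (a b : ℝ) (ha : 0 ≤ a) (hb : 0 ≤ b) :
    ∀ ε ∈ Set.Ioo (0:ℝ) 1, ∃ δ : ℝ, 0 < δ ∧
      ∀ lam ∈ Set.Icc (0:ℝ) δ, ∀ x : ℕ → ℝ,
        (∀ k : ℕ, 0 ≤ x k) → x 1 ≤ δ →
        (∀ k : ℕ, 2 ≤ k →
          x k ≤ lam * x k
            + a * ∑ p ∈ (range (k+1) ×ˢ range (k+1)).filter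
                (fun p : ℕ × ℕ => p.1 + p.2 = k ∧ 1 ≤ p.1 ∧ 1 ≤ p.2),
                x p.1 * x p.2
            + b * ∑ p ∈ (range (k+1) ×ˢ range (k+1) ×ˢ range (k+1)).filter
                (fun p : ℕ × ℕ × ℕ =>
                  p.1 + p.2.1 + p.2.2 = k ∧ 1 ≤ p.1 ∧ 1 ≤ p.2.1 ∧ 1 ≤ p.2.2),
                x p.1 * x p.2.1 * x p.2.2) →
        ∀ k : ℕ, 1 ≤ k → x k ≤ ε ^ k := by
  intro ε hε
  obtain ⟨hε0, hε1⟩ := hε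
  set M : ℝ := min 1 (1/(16*a+72*b+1)) with hMdef
  have hM0 : 0 < M := lt_min one_pos (by positivity)
  have hM1 : M ≤ 1 := min_le_left _ _
  have hMkey : 16*a*M + 72*b*M^2 ≤ 1 := by
    have h2 : M ≤ 1/(16*a+72*b+1) := min_le_right _ _
    have h3 : M*(16*a+72*b+1) ≤ 1 := by
      rw [← le_div_iff₀ (by positivity : (0:ℝ) < 16*a+72*b+1)]
      exact h2
    nlinarith [mul_nonneg (mul_nonneg hb hM0.le) (sub_nonneg.mpr hM1)]
  refine ⟨min (1/2) (M*ε), lt_min (by norm_num) (by positivity), ?_⟩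
  intro lam hlam x hx hx1 hrec
  have hlam0 : 0 ≤ lam := hlam.1
  have hlam2 : lam ≤ 1/2 := hlam.2.trans (min_le_left _ _)
  have main : ∀ k, 1 ≤ k → x k ≤ M * ε^k / (k:ℝ)^2 := by
    intro k
    induction k using Nat.strong_induction_on with
    | _ k IH =>
    intro hk1
    rcases Nat.lt_or_ge k 2 with hlt | hk2
    · have hk : k = 1 := by omega
      subst hk
      have h := hx1.trans (min_le_right (1/2) (M*ε))
      simpa using h
    · -- k ≥ 2
      have hkR : (1:ℝ) ≤ (k:ℝ) := by exact_mod_cast hk1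
      have hkR0 : (0:ℝ) < (k:ℝ) := by linarith
      have hIH : ∀ j, 1 ≤ j → j < k → x j ≤ M * ε^j / (j:ℝ)^2 := fun j h1 h2 => IH j h2 h1
      -- pair sum bound
      set P := (range (k+1) ×ˢ range (k+1)).filter
        (fun p : ℕ × ℕ => p.1 + p.2 = k ∧ 1 ≤ p.1 ∧ 1 ≤ p.2) with hPdef
      have hS2 : ∑ p ∈ P, x p.1 * x p.2 ≤ 8 * (M^2 * ε^k / (k:ℝ)^2) := by
        have step1 : ∑ p ∈ P, x p.1 * x p.2
            ≤ ∑ p ∈ P, M^2 * ε^k * (2/(k:ℝ)^2) * (1/(p.1:ℝ)^2 + 1/(p.2:ℝ)^2) := by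
          apply Finset.sum_le_sum
          intro p hp
          rw [hPdef, Finset.mem_filter] at hp
          obtain ⟨-, hsum, h1, h2⟩ := hp
          have b1 := hIH p.1 h1 (by omega)
          have b2 := hIH p.2 h2 (by omega)
          have hp1 : (1:ℝ) ≤ (p.1:ℝ) := by exact_mod_cast h1
          have hp2 : (1:ℝ) ≤ (p.2:ℝ) := by exact_mod_cast h2
          have hp10 : (0:ℝ) < (p.1:ℝ) := by linarith
          have hp20 : (0:ℝ) < (p.2:ℝ) := by linarith
          have hcast : (p.1:ℝ) + (p.2:ℝ) = (k:ℝ) := by exact_mod_cast hsum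
          calc x p.1 * x p.2 ≤ (M * ε^p.1 / (p.1:ℝ)^2) * (M * ε^p.2 / (p.2:ℝ)^2) :=
                mul_le_mul b1 b2 (hx p.2) (by positivity)
            _ = M^2 * ε^k * (1/((p.1:ℝ)^2*(p.2:ℝ)^2)) := by
                rw [show ε^k = ε^p.1 * ε^p.2 by rw [← pow_add, hsum]]
                field_simp
            _ ≤ M^2 * ε^k * (2/(k:ℝ)^2 * (1/(p.1:ℝ)^2 + 1/(p.2:ℝ)^2)) := by
                apply mul_le_mul_of_nonneg_left (key2 _ _ _ hp10 hp20 hcast) (by positivity)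
            _ = M^2 * ε^k * (2/(k:ℝ)^2) * (1/(p.1:ℝ)^2 + 1/(p.2:ℝ)^2) := by ring
        have step2 : ∑ p ∈ P, (1/(p.1:ℝ)^2 + 1/(p.2:ℝ)^2) ≤ 4 := by
          rw [Finset.sum_add_distrib]
          have memP : ∀ p ∈ P, p.1 + p.2 = k ∧ 1 ≤ p.1 ∧ 1 ≤ p.2 := by
            intro p hp; rw [hPdef, Finset.mem_filter] at hp; exact hp.2
          have A : ∑ p ∈ P, (1:ℝ)/(p.1:ℝ)^2 ≤ ∑ j ∈ Finset.Icc 1 k, (1:ℝ)/(j:ℝ)^2 := by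
            apply sum_comp_le Prod.fst (fun j : ℕ => (1:ℝ)/(j:ℝ)^2) (fun b _ => by positivity)
            · intro p hp q hq h
              have hp' := memP p hp; have hq' := memP q hq
              exact Prod.ext h (by omega)
            · intro p hp
              have hp' := memP p hp
              rw [Finset.mem_Icc]; omega
          have B : ∑ p ∈ P, (1:ℝ)/(p.2:ℝ)^2 ≤ ∑ j ∈ Finset.Icc 1 k, (1:ℝ)/(j:ℝ)^2 := by
            apply sum_comp_le Prod.snd (fun j : ℕ => (1:ℝ)/(j:ℝ)^2) (fun b _ => by positivity)
            · intro p hp q hq h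
              have hp' := memP p hp; have hq' := memP q hq
              exact Prod.ext (by omega) h
            · intro p hp
              have hp' := memP p hp
              rw [Finset.mem_Icc]; omega
          have C := sum_inv_sq_le k
          linarith
        calc ∑ p ∈ P, x p.1 * x p.2
            ≤ ∑ p ∈ P, M^2 * ε^k * (2/(k:ℝ)^2) * (1/(p.1:ℝ)^2 + 1/(p.2:ℝ)^2) := step1
          _ = M^2 * ε^k * (2/(k:ℝ)^2) * ∑ p ∈ P, (1/(p.1:ℝ)^2 + 1/(p.2:ℝ)^2) := by
              rw [← Finset.mul_sum]
          _ ≤ M^2 * ε^k * (2/(k:ℝ)^2) * 4 := by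
              apply mul_le_mul_of_nonneg_left step2 (by positivity)
          _ = 8 * (M^2 * ε^k / (k:ℝ)^2) := by ring
      -- triple sum bound
      set T := (range (k+1) ×ˢ range (k+1) ×ˢ range (k+1)).filter
        (fun p : ℕ × ℕ × ℕ => p.1 + p.2.1 + p.2.2 = k ∧ 1 ≤ p.1 ∧ 1 ≤ p.2.1 ∧ 1 ≤ p.2.2)
        with hTdef
      have hS3 : ∑ p ∈ T, x p.1 * x p.2.1 * x p.2.2 ≤ 36 * (M^3 * ε^k / (k:ℝ)^2) := by
        have memT : ∀ p ∈ T, p.1 + p.2.1 + p.2.2 = k ∧ 1 ≤ p.1 ∧ 1 ≤ p.2.1 ∧ 1 ≤ p.2.2 := by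
          intro p hp; rw [hTdef, Finset.mem_filter] at hp; exact hp.2
        have step1 : ∑ p ∈ T, x p.1 * x p.2.1 * x p.2.2
            ≤ ∑ p ∈ T, M^3 * ε^k * (3/(k:ℝ)^2) *
              (1/((p.2.1:ℝ)^2*(p.2.2:ℝ)^2) + 1/((p.1:ℝ)^2*(p.2.2:ℝ)^2)
                + 1/((p.1:ℝ)^2*(p.2.1:ℝ)^2)) := by
          apply Finset.sum_le_sum
          intro p hp
          obtain ⟨hsum, h1, h2, h3⟩ := memT p hp
          have b1 := hIH p.1 h1 (by omega)
          have b2 := hIH p.2.1 h2 (by omega)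
          have b3 := hIH p.2.2 h3 (by omega)
          have hp1 : (1:ℝ) ≤ (p.1:ℝ) := by exact_mod_cast h1
          have hp2 : (1:ℝ) ≤ (p.2.1:ℝ) := by exact_mod_cast h2
          have hp3 : (1:ℝ) ≤ (p.2.2:ℝ) := by exact_mod_cast h3
          have hp10 : (0:ℝ) < (p.1:ℝ) := by linarith
          have hp20 : (0:ℝ) < (p.2.1:ℝ) := by linarith
          have hp30 : (0:ℝ) < (p.2.2:ℝ) := by linarith
          have hcast : (p.1:ℝ) + (p.2.1:ℝ) + (p.2.2:ℝ) = (k:ℝ) := by exact_mod_cast hsum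
          calc x p.1 * x p.2.1 * x p.2.2
              ≤ (M * ε^p.1 / (p.1:ℝ)^2) * (M * ε^p.2.1 / (p.2.1:ℝ)^2)
                  * (M * ε^p.2.2 / (p.2.2:ℝ)^2) := by
                apply mul_le_mul _ b3 (hx p.2.2) (by positivity)
                exact mul_le_mul b1 b2 (hx p.2.1) (by positivity)
            _ = M^3 * ε^k * (1/((p.1:ℝ)^2*(p.2.1:ℝ)^2*(p.2.2:ℝ)^2)) := by
                rw [show ε^k = ε^p.1 * ε^p.2.1 * ε^p.2.2 by rw [← pow_add, ← pow_add, hsum]]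
                field_simp
            _ ≤ M^3 * ε^k * (3/(k:ℝ)^2 * (1/((p.2.1:ℝ)^2*(p.2.2:ℝ)^2)
                  + 1/((p.1:ℝ)^2*(p.2.2:ℝ)^2) + 1/((p.1:ℝ)^2*(p.2.1:ℝ)^2))) := by
                apply mul_le_mul_of_nonneg_left
                  (key3 _ _ _ _ hp10 hp20 hp30 hcast) (by positivity)
            _ = M^3 * ε^k * (3/(k:ℝ)^2) * (1/((p.2.1:ℝ)^2*(p.2.2:ℝ)^2)
                  + 1/((p.1:ℝ)^2*(p.2.2:ℝ)^2) + 1/((p.1:ℝ)^2*(p.2.1:ℝ)^2)) := by ring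
        have step2 : ∑ p ∈ T, (1/((p.2.1:ℝ)^2*(p.2.2:ℝ)^2) + 1/((p.1:ℝ)^2*(p.2.2:ℝ)^2)
            + 1/((p.1:ℝ)^2*(p.2.1:ℝ)^2)) ≤ 12 := by
          rw [Finset.sum_add_distrib, Finset.sum_add_distrib]
          have A : ∑ p ∈ T, (1:ℝ)/((p.2.1:ℝ)^2*(p.2.2:ℝ)^2)
              ≤ ∑ q ∈ Finset.Icc 1 k ×ˢ Finset.Icc 1 k, (1:ℝ)/((q.1:ℝ)^2*(q.2:ℝ)^2) := by
            apply sum_comp_le (fun p : ℕ × ℕ × ℕ => (p.2.1, p.2.2))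
              (fun q : ℕ × ℕ => (1:ℝ)/((q.1:ℝ)^2*(q.2:ℝ)^2)) (fun q _ => by positivity)
            · intro p hp q hq h
              have hp' := memT p hp; have hq' := memT q hq
              have e1 : p.2.1 = q.2.1 := (Prod.ext_iff.mp h).1
              have e2 : p.2.2 = q.2.2 := (Prod.ext_iff.mp h).2
              exact Prod.ext (by omega) (Prod.ext e1 e2)
            · intro p hp
              have hp' := memT p hp
              simp only [Finset.mem_product, Finset.mem_Icc]
              omega
          have B : ∑ p ∈ T, (1:ℝ)/((p.1:ℝ)^2*(p.2.2:ℝ)^2)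
              ≤ ∑ q ∈ Finset.Icc 1 k ×ˢ Finset.Icc 1 k, (1:ℝ)/((q.1:ℝ)^2*(q.2:ℝ)^2) := by
            apply sum_comp_le (fun p : ℕ × ℕ × ℕ => (p.1, p.2.2))
              (fun q : ℕ × ℕ => (1:ℝ)/((q.1:ℝ)^2*(q.2:ℝ)^2)) (fun q _ => by positivity)
            · intro p hp q hq h
              have hp' := memT p hp; have hq' := memT q hq
              have e1 : p.1 = q.1 := (Prod.ext_iff.mp h).1
              have e2 : p.2.2 = q.2.2 := (Prod.ext_iff.mp h).2
              exact Prod.ext e1 (Prod.ext (by omega) e2)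
            · intro p hp
              have hp' := memT p hp
              simp only [Finset.mem_product, Finset.mem_Icc]
              omega
          have C : ∑ p ∈ T, (1:ℝ)/((p.1:ℝ)^2*(p.2.1:ℝ)^2)
              ≤ ∑ q ∈ Finset.Icc 1 k ×ˢ Finset.Icc 1 k, (1:ℝ)/((q.1:ℝ)^2*(q.2:ℝ)^2) := by
            apply sum_comp_le (fun p : ℕ × ℕ × ℕ => (p.1, p.2.1))
              (fun q : ℕ × ℕ => (1:ℝ)/((q.1:ℝ)^2*(q.2:ℝ)^2)) (fun q _ => by positivity)
            · intro p hp q hq h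
              have hp' := memT p hp; have hq' := memT q hq
              have e1 : p.1 = q.1 := (Prod.ext_iff.mp h).1
              have e2 : p.2.1 = q.2.1 := (Prod.ext_iff.mp h).2
              exact Prod.ext e1 (Prod.ext e2 (by omega))
            · intro p hp
              have hp' := memT p hp
              simp only [Finset.mem_product, Finset.mem_Icc]
              omega
          have D := sum_sq_pairs_le k
          linarith
        calc ∑ p ∈ T, x p.1 * x p.2.1 * x p.2.2
            ≤ ∑ p ∈ T, M^3 * ε^k * (3/(k:ℝ)^2) * (1/((p.2.1:ℝ)^2*(p.2.2:ℝ)^2)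
                + 1/((p.1:ℝ)^2*(p.2.2:ℝ)^2) + 1/((p.1:ℝ)^2*(p.2.1:ℝ)^2)) := step1
          _ = M^3 * ε^k * (3/(k:ℝ)^2) * ∑ p ∈ T, (1/((p.2.1:ℝ)^2*(p.2.2:ℝ)^2)
                + 1/((p.1:ℝ)^2*(p.2.2:ℝ)^2) + 1/((p.1:ℝ)^2*(p.2.1:ℝ)^2)) := by
              rw [← Finset.mul_sum]
          _ ≤ M^3 * ε^k * (3/(k:ℝ)^2) * 12 := by
              apply mul_le_mul_of_nonneg_left step2 (by positivity)
          _ = 36 * (M^3 * ε^k / (k:ℝ)^2) := by ring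
      -- combine
      have hrec' := hrec k hk2
      rw [← hPdef, ← hTdef] at hrec'
      have hhalf : lam * x k ≤ (1/2) * x k := mul_le_mul_of_nonneg_right hlam2 (hx k)
      have e1 : a * (∑ p ∈ P, x p.1 * x p.2) ≤ a * (8 * (M^2 * ε^k / (k:ℝ)^2)) :=
        mul_le_mul_of_nonneg_left hS2 ha
      have e2 : b * (∑ p ∈ T, x p.1 * x p.2.1 * x p.2.2) ≤ b * (36 * (M^3 * ε^k / (k:ℝ)^2)) :=
        mul_le_mul_of_nonneg_left hS3 hb
      have e3 : (16*a*M + 72*b*M^2) * (M * ε^k / (k:ℝ)^2) ≤ 1 * (M * ε^k / (k:ℝ)^2) :=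
        mul_le_mul_of_nonneg_right hMkey (by positivity)
      have e4 : 2*(a * (8 * (M^2 * ε^k / (k:ℝ)^2)) + b * (36 * (M^3 * ε^k / (k:ℝ)^2)))
          = (16*a*M + 72*b*M^2) * (M * ε^k / (k:ℝ)^2) := by ring
      linarith
  intro k hk
  have h := main k hk
  have h1 : (1:ℝ) ≤ (k:ℝ) := by exact_mod_cast hk
  have h2 : (1:ℝ) ≤ (k:ℝ)^2 := by nlinarith
  have d1 : M * ε^k / (k:ℝ)^2 ≤ M * ε^k := div_le_self (by positivity) h2
  have d2 : M * ε^k ≤ ε^k := by nlinarith [pow_nonneg hε0.le k]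
  linarith
end
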